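/- Let τ≥0, c∈ℝ, C₀>0 and let u:ℝ→ℝ be a bounded continuous function with 0 ≤ u(x) ≤ C₀ for all x. Define v(x) = ∫₀^∞ ∫_ℝ (e^{−s}/√(4πs)) e^{−(x−z)²/(4s)} u(z+τcs) dz ds. Then for every x∈ℝ: 0 ≤ v(x) ≤ C₀; moreover v is differentiable on ℝ and |v'(x)| ≤ C₀/2 for every x∈ℝ. -/

import Mathlib

open Real MeasureTheory Set Filter

/-- `v(x) = ∫₀^∞ ∫_ℝ (e^{−s}/√(4πs)) e^{−(x−z)²/(4s)} u(z+τcs) dz ds`. -/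
noncomputable def vInt (τ c : ℝ) (u : ℝ → ℝ) (x : ℝ) : ℝ :=
  ∫ s in Ioi (0:ℝ), ∫ z : ℝ,
    (Real.exp (-s) / Real.sqrt (4 * π * s)) * Real.exp (-(x - z) ^ 2 / (4 * s))
      * u (z + τ * c * s)

-- ∫ r in Ioi 0, r * exp (-b r²) = (2b)⁻¹
lemma intIoi_mul_exp {b : ℝ} (hb : 0 < b) :
    ∫ r in Ioi (0:ℝ), r * Real.exp (-b * r ^ 2) = (2 * b)⁻¹ := by
  have hderiv : ∀ x ∈ Ici (0:ℝ),
      HasDerivAt (fun r : ℝ => -(2*b)⁻¹ * Real.exp (-b * r^2))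
        (x * Real.exp (-b * x^2)) x := by
    intro x _
    have h1 : HasDerivAt (fun r : ℝ => -b * r ^ 2) (-b * (2 * x)) x := by
      simpa using ((hasDerivAt_pow 2 x).const_mul (-b))
    have h2 := (h1.exp).const_mul (-(2*b)⁻¹)
    refine h2.congr_deriv ?_
    have hb' : b ≠ 0 := hb.ne'
    field_simp
  have hint : IntegrableOn (fun x : ℝ => x * Real.exp (-b * x^2)) (Ioi 0) :=
    (integrable_mul_exp_neg_mul_sq hb).integrableOn
  have htend : Tendsto (fun r : ℝ => -(2*b)⁻¹ * Real.exp (-b * r^2)) atTop (nhds 0) := by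
    rw [show (0:ℝ) = -(2*b)⁻¹ * 0 by ring]
    apply Tendsto.const_mul
    apply Real.tendsto_exp_atBot.comp
    have : Tendsto (fun x : ℝ => x ^ 2) atTop atTop := tendsto_pow_atTop (by norm_num)
    exact (tendsto_const_mul_atBot_of_neg (by linarith : -b < 0)).2 this
  have := integral_Ioi_of_hasDerivAt_of_tendsto' hderiv hint htend
  rw [this]
  simp

-- integrability of |t| * exp (-b t²)
lemma int_abs_mul_exp {b : ℝ} (hb : 0 < b) :
    Integrable (fun t : ℝ => |t| * Real.exp (-b * t ^ 2)) := by
  have := (integrable_mul_exp_neg_mul_sq hb).abs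
  refine this.congr (Eventually.of_forall fun t => ?_)
  simp [abs_mul, abs_of_pos (Real.exp_pos _)]

-- value of ∫ |t| exp(-b t²)
lemma int_abs_mul_exp_eq {b : ℝ} (hb : 0 < b) :
    ∫ t : ℝ, |t| * Real.exp (-b * t ^ 2) = b⁻¹ := by
  have : (fun t : ℝ => |t| * Real.exp (-b * t ^ 2))
      = fun t : ℝ => |t| * Real.exp (-b * |t| ^ 2) := by
    funext t; rw [sq_abs]
  rw [this, integral_comp_abs (f := fun r => r * Real.exp (-b * r ^ 2)),
    intIoi_mul_exp hb]
  field_simp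

lemma intK_one {s : ℝ} (hs : 0 < s) (x : ℝ) :
    ∫ z : ℝ, Real.exp (-(x - z) ^ 2 / (4 * s)) = Real.sqrt (4 * π * s) := by
  have hrw : (fun z : ℝ => Real.exp (-(x - z) ^ 2 / (4 * s)))
      = fun z => (fun t : ℝ => Real.exp (-(4*s)⁻¹ * t ^ 2)) (z - x) := by
    funext z; congr 1; field_simp; ring
  rw [hrw, integral_sub_right_eq_self (μ := volume) (fun t : ℝ => Real.exp (-(4*s)⁻¹ * t ^ 2)) x,
    integral_gaussian]
  congr 1
  field_simp

lemma intK_odd (s x : ℝ) :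
    ∫ z : ℝ, (z - x) * Real.exp (-(x - z) ^ 2 / (4 * s)) = 0 := by
  set f : ℝ → ℝ := fun t => t * Real.exp (-t ^ 2 / (4 * s)) with hf
  have hrw : (fun z : ℝ => (z - x) * Real.exp (-(x - z) ^ 2 / (4 * s)))
      = fun z => f (z - x) := by
    funext z; simp only [hf]; congr 2; ring
  rw [hrw, integral_sub_right_eq_self (μ := volume) f x]
  have h1 : ∫ t : ℝ, f (-t) = ∫ t : ℝ, f t := integral_neg_eq_self f volume
  have h2 : (fun t : ℝ => f (-t)) = fun t => -f t := by
    funext t; simp only [hf]; rw [neg_sq]; ring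
  rw [h2, integral_neg] at h1
  linarith

lemma intK_abs {s : ℝ} (hs : 0 < s) (x : ℝ) :
    ∫ z : ℝ, |z - x| * Real.exp (-(x - z) ^ 2 / (4 * s)) = 4 * s := by
  have hb : (0:ℝ) < (4*s)⁻¹ := by positivity
  have hrw : (fun z : ℝ => |z - x| * Real.exp (-(x - z) ^ 2 / (4 * s)))
      = fun z => (fun t : ℝ => |t| * Real.exp (-(4*s)⁻¹ * t ^ 2)) (z - x) := by
    funext z
    have : -(x - z) ^ 2 / (4 * s) = -(4*s)⁻¹ * (z - x) ^ 2 := by field_simp; ring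
    rw [this]
  rw [hrw, integral_sub_right_eq_self (μ := volume)
    (fun t : ℝ => |t| * Real.exp (-(4*s)⁻¹ * t ^ 2)) x, int_abs_mul_exp_eq hb, inv_inv]

lemma intK_abs_integrable {s : ℝ} (hs : 0 < s) (x : ℝ) :
    Integrable (fun z : ℝ => |z - x| * Real.exp (-(x - z) ^ 2 / (4 * s))) := by
  have hb : (0:ℝ) < (4*s)⁻¹ := by positivity
  have hrw : (fun z : ℝ => |z - x| * Real.exp (-(x - z) ^ 2 / (4 * s)))
      = fun z => (fun t : ℝ => |t| * Real.exp (-(4*s)⁻¹ * t ^ 2)) (z - x) := by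
    funext z
    have : -(x - z) ^ 2 / (4 * s) = -(4*s)⁻¹ * (z - x) ^ 2 := by field_simp; ring
    rw [this]
  rw [hrw]
  exact (int_abs_mul_exp hb).comp_sub_right x

lemma intK_integrable {s : ℝ} (hs : 0 < s) (x : ℝ) :
    Integrable (fun z : ℝ => Real.exp (-(x - z) ^ 2 / (4 * s))) := by
  have hb : (0:ℝ) < (4*s)⁻¹ := by positivity
  have hrw : (fun z : ℝ => Real.exp (-(x - z) ^ 2 / (4 * s)))
      = fun z => (fun t : ℝ => Real.exp (-(4*s)⁻¹ * t ^ 2)) (z - x) := by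
    funext z
    have : -(x - z) ^ 2 / (4 * s) = -(4*s)⁻¹ * (z - x) ^ 2 := by field_simp; ring
    rw [this]
  rw [hrw]
  exact (integrable_exp_neg_mul_sq hb).comp_sub_right x

lemma intK_mul_integrable {s : ℝ} (hs : 0 < s) (x : ℝ) (g : ℝ → ℝ)
    (hg : Continuous g) (M : ℝ) (hM : ∀ y, |g y| ≤ M) :
    Integrable (fun z : ℝ => Real.exp (-(x - z) ^ 2 / (4 * s)) * g z) := by
  have := Integrable.bdd_mul (intK_integrable hs x) hg.aestronglyMeasurable
    (c := M) (ae_of_all _ fun y => by simpa using hM y)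
  exact this.congr (Filter.Eventually.of_forall fun z => mul_comm _ _)

section
variable (τ c C₀ : ℝ) (u : ℝ → ℝ)

noncomputable def Kf (x s z : ℝ) : ℝ :=
  Real.exp (-s) / Real.sqrt (4 * π * s) * Real.exp (-(x - z) ^ 2 / (4 * s)) * u (z + τ * c * s)

noncomputable def Kf' (x s z : ℝ) : ℝ :=
  (z - x) / (2 * s) * (Real.exp (-s) / Real.sqrt (4 * π * s)
    * Real.exp (-(x - z) ^ 2 / (4 * s))) * u (z + τ * c * s)

variable {u}

lemma measKf (hucont : Continuous u) (x : ℝ) :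
    Measurable (Function.uncurry fun s z : ℝ => Kf τ c u x s z) := by
  have m0 : Measurable fun p : ℝ × ℝ => Real.exp (-p.1) / Real.sqrt (4 * π * p.1) :=
    ((Real.continuous_exp.comp continuous_fst.neg).measurable).div
      ((Real.continuous_sqrt.comp (continuous_const.mul continuous_fst)).measurable)
  have m1 : Measurable fun p : ℝ × ℝ => Real.exp (-(x - p.2) ^ 2 / (4 * p.1)) :=
    Real.continuous_exp.measurable.comp
      ((((continuous_const.sub continuous_snd).pow 2).neg.measurable).div
        ((continuous_const.mul continuous_fst).measurable))
  have m2 : Measurable fun p : ℝ × ℝ => u (p.2 + τ * c * p.1) :=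
    (hucont.comp (continuous_snd.add (continuous_const.mul continuous_fst))).measurable
  exact (m0.mul m1).mul m2

lemma measKf' (hucont : Continuous u) (x : ℝ) :
    Measurable (Function.uncurry fun s z : ℝ => Kf' τ c u x s z) := by
  have m0 : Measurable fun p : ℝ × ℝ => Real.exp (-p.1) / Real.sqrt (4 * π * p.1) :=
    ((Real.continuous_exp.comp continuous_fst.neg).measurable).div
      ((Real.continuous_sqrt.comp (continuous_const.mul continuous_fst)).measurable)
  have m1 : Measurable fun p : ℝ × ℝ => Real.exp (-(x - p.2) ^ 2 / (4 * p.1)) :=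
    Real.continuous_exp.measurable.comp
      ((((continuous_const.sub continuous_snd).pow 2).neg.measurable).div
        ((continuous_const.mul continuous_fst).measurable))
  have m2 : Measurable fun p : ℝ × ℝ => u (p.2 + τ * c * p.1) :=
    (hucont.comp (continuous_snd.add (continuous_const.mul continuous_fst))).measurable
  have m3 : Measurable fun p : ℝ × ℝ => (p.2 - p.1 * 0 - x) / (2 * p.1) :=
    ((continuous_snd.sub (continuous_fst.mul continuous_const)).sub
      continuous_const).measurable.div ((continuous_const.mul continuous_fst).measurable)
  simp only [mul_zero, sub_zero] at m3
  exact (m3.mul (m0.mul m1)).mul m2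

lemma contKf (hucont : Continuous u) (x s : ℝ) : Continuous fun z => Kf τ c u x s z := by
  apply Continuous.mul
  · exact continuous_const.mul
      (Real.continuous_exp.comp (((continuous_const.sub continuous_id).pow 2).neg.div_const _))
  · exact hucont.comp (continuous_id.add continuous_const)

lemma contKf' (hucont : Continuous u) (x s : ℝ) : Continuous fun z => Kf' τ c u x s z := by
  apply Continuous.mul
  · apply Continuous.mul
    · exact (continuous_id.sub continuous_const).div_const _
    · exact continuous_const.mul
        (Real.continuous_exp.comp (((continuous_const.sub continuous_id).pow 2).neg.div_const _))
  · exact hucont.comp (continuous_id.add continuous_const)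
end

section
variable {τ c C₀ : ℝ} {u : ℝ → ℝ}

-- the kernel constant is nonnegative
lemma c1_nonneg (s : ℝ) : 0 ≤ Real.exp (-s) / Real.sqrt (4 * π * s) :=
  div_nonneg (Real.exp_pos _).le (Real.sqrt_nonneg _)

lemma intKf (hC₀ : 0 < C₀) (hucont : Continuous u) (hu : ∀ y, 0 ≤ u y ∧ u y ≤ C₀)
    {s : ℝ} (hs : 0 < s) (x : ℝ) : Integrable (fun z => Kf τ c u x s z) := by
  have h := intK_mul_integrable hs x (fun z => u (z + τ * c * s))
    (hucont.comp (continuous_id.add continuous_const)) C₀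
    (fun y => abs_le.2 ⟨by linarith [(hu (y + τ * c * s)).1], (hu (y + τ * c * s)).2⟩)
  have h2 := h.const_mul (Real.exp (-s) / Real.sqrt (4 * π * s))
  exact h2.congr (Eventually.of_forall fun z => by simp only [Kf]; ring)

lemma Ff_nonneg (hu : ∀ y, 0 ≤ u y ∧ u y ≤ C₀) (x s : ℝ) :
    0 ≤ ∫ z, Kf τ c u x s z :=
  integral_nonneg fun z => mul_nonneg (mul_nonneg (c1_nonneg s) (Real.exp_pos _).le)
    (hu _).1

lemma Ff_le (hC₀ : 0 < C₀) (hucont : Continuous u) (hu : ∀ y, 0 ≤ u y ∧ u y ≤ C₀)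
    {s : ℝ} (hs : 0 < s) (x : ℝ) :
    ∫ z, Kf τ c u x s z ≤ C₀ * Real.exp (-s) := by
  have hsqrt : 0 < Real.sqrt (4 * π * s) := Real.sqrt_pos.2 (by positivity)
  have h1 : ∫ z, Kf τ c u x s z ≤
      ∫ z, (C₀ * (Real.exp (-s) / Real.sqrt (4 * π * s)))
        * Real.exp (-(x - z) ^ 2 / (4 * s)) := by
    refine integral_mono (intKf hC₀ hucont hu hs x)
      ((intK_integrable hs x).const_mul _) fun z => ?_
    simp only [Kf]
    have := (hu (z + τ * c * s)).2
    have h0 := mul_nonneg (c1_nonneg s) (Real.exp_pos (-(x - z) ^ 2 / (4 * s))).le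
    calc Real.exp (-s) / Real.sqrt (4 * π * s) * Real.exp (-(x - z) ^ 2 / (4 * s))
        * u (z + τ * c * s)
        ≤ Real.exp (-s) / Real.sqrt (4 * π * s) * Real.exp (-(x - z) ^ 2 / (4 * s)) * C₀ := by
          exact mul_le_mul_of_nonneg_left this h0
      _ = C₀ * (Real.exp (-s) / Real.sqrt (4 * π * s)) * Real.exp (-(x - z) ^ 2 / (4 * s)) := by
          ring
  rw [integral_const_mul, intK_one hs x] at h1
  calc ∫ z, Kf τ c u x s z ≤ _ := h1
    _ = C₀ * Real.exp (-s) := by field_simp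
end

section
variable {τ c C₀ : ℝ} {u : ℝ → ℝ}

lemma Kf_hasDerivAt {s : ℝ} (hs : 0 < s) (z x : ℝ) :
    HasDerivAt (fun x => Kf τ c u x s z) (Kf' τ c u x s z) x := by
  have h1 : HasDerivAt (fun x : ℝ => -(x - z) ^ 2 / (4 * s))
      (-(2 * (x - z)) / (4 * s)) x := by
    have := (((hasDerivAt_id x).sub_const z).pow 2).neg.div_const (4 * s)
    refine this.congr_deriv ?_
    simp only [id_eq]
    push_cast
    ring
  have h2 := h1.exp
  have h3 := (h2.const_mul (Real.exp (-s) / Real.sqrt (4 * π * s))).mul_const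
    (u (z + τ * c * s))
  refine h3.congr_deriv ?_
  simp only [Kf']
  have hs' : s ≠ 0 := ne_of_gt hs
  field_simp
  ring

lemma Ff_hasDerivAt (hC₀ : 0 < C₀) (hucont : Continuous u)
    (hu : ∀ y, 0 ≤ u y ∧ u y ≤ C₀) {s : ℝ} (hs : 0 < s) (x₀ : ℝ) :
    HasDerivAt (fun x => ∫ z, Kf τ c u x s z) (∫ z, Kf' τ c u x₀ s z) x₀ := by
  have hb8 : (0:ℝ) < (8 * s)⁻¹ := by positivity
  set c1 : ℝ := Real.exp (-s) / Real.sqrt (4 * π * s) with hc1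
  have hc1n : 0 ≤ c1 := c1_nonneg s
  -- the dominating function
  set bound : ℝ → ℝ := fun z =>
    (|z - x₀| + 1) / (2 * s) * (c1 * (Real.exp (1 / (2 * s))
      * Real.exp (-(8 * s)⁻¹ * (z - x₀) ^ 2))) * C₀ with hbound
  have h := hasDerivAt_integral_of_dominated_loc_of_deriv_le (μ := volume)
    (x₀ := x₀) (F := fun x z => Kf τ c u x s z) (F' := fun x z => Kf' τ c u x s z)
    (bound := bound) (Metric.ball_mem_nhds x₀ one_pos)
    (Eventually.of_forall fun x => (contKf τ c hucont x s).aestronglyMeasurable)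
    (intKf hC₀ hucont hu hs x₀)
    ((contKf' τ c hucont x₀ s).aestronglyMeasurable)
    ?_ ?_
    (Eventually.of_forall fun z x _ => Kf_hasDerivAt hs z x)
  · exact h.2
  · -- bound
    refine Eventually.of_forall fun z => fun x hx => ?_
    have hd : |x - x₀| < 1 := by
      have := mem_ball_iff_norm.1 hx
      simpa [Real.norm_eq_abs] using this
    have hd2 : (x - x₀) ^ 2 ≤ 1 := by
      rw [← sq_abs]; nlinarith [abs_nonneg (x - x₀)]
    have hzx : |z - x| ≤ |z - x₀| + 1 := by
      calc |z - x| = |(z - x₀) - (x - x₀)| := by ring_nf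
        _ ≤ |z - x₀| + |x - x₀| := abs_sub _ _
        _ ≤ |z - x₀| + 1 := by linarith
    have hexp : Real.exp (-(x - z) ^ 2 / (4 * s)) ≤
        Real.exp (1 / (2 * s)) * Real.exp (-(8 * s)⁻¹ * (z - x₀) ^ 2) := by
      rw [← Real.exp_add, Real.exp_le_exp]
      have key : (z - x₀) ^ 2 ≤ 2 * (x - z) ^ 2 + 4 := by
        nlinarith [sq_nonneg (z - x₀ - 2 * (x - x₀))]
      have expand : 1 / (2 * s) + -(8 * s)⁻¹ * (z - x₀) ^ 2 - (-(x - z) ^ 2 / (4 * s))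
          = (4 - (z - x₀) ^ 2 + 2 * (x - z) ^ 2) / (8 * s) := by
        field_simp
        ring
      have hne : 0 ≤ (4 - (z - x₀) ^ 2 + 2 * (x - z) ^ 2) / (8 * s) :=
        div_nonneg (by linarith) (by positivity)
      linarith
    have hu' : |u (z + τ * c * s)| ≤ C₀ :=
      abs_le.2 ⟨by linarith [(hu (z + τ * c * s)).1], (hu (z + τ * c * s)).2⟩
    have habs : ‖Kf' τ c u x s z‖ = |(z - x) / (2 * s)|
        * (c1 * Real.exp (-(x - z) ^ 2 / (4 * s))) * |u (z + τ * c * s)| := by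
      simp only [Kf', Real.norm_eq_abs, abs_mul, Real.abs_exp,
        abs_of_nonneg (c1_nonneg s), ← hc1, abs_of_nonneg hc1n]
    rw [habs, hbound]
    have f1 : |(z - x) / (2 * s)| ≤ (|z - x₀| + 1) / (2 * s) := by
      rw [abs_div, abs_of_pos (by positivity : (0:ℝ) < 2 * s)]
      gcongr
    have f2 : c1 * Real.exp (-(x - z) ^ 2 / (4 * s)) ≤
        c1 * (Real.exp (1 / (2 * s)) * Real.exp (-(8 * s)⁻¹ * (z - x₀) ^ 2)) :=
      mul_le_mul_of_nonneg_left hexp hc1n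
    exact mul_le_mul (mul_le_mul f1 f2 (by positivity) (by positivity)) hu'
      (abs_nonneg _) (by positivity)
  · -- integrability of bound
    set g : ℝ → ℝ := fun t => (|t| + 1) * Real.exp (-(8 * s)⁻¹ * t ^ 2) with hgdef
    have hg : Integrable g := by
      have h := (int_abs_mul_exp hb8).add (integrable_exp_neg_mul_sq hb8)
      exact h.congr (Eventually.of_forall fun t => by simp only [hgdef, Pi.add_apply]; ring)
    have hg2 := (hg.comp_sub_right x₀).const_mul
      ((2 * s)⁻¹ * (c1 * Real.exp (1 / (2 * s))) * C₀)
    refine hg2.congr (Eventually.of_forall fun z => ?_)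
    simp only [hbound, hgdef]
    ring

lemma sqrt4pis {s : ℝ} (hs : 0 < s) :
    Real.sqrt (4 * π * s) = 2 * Real.sqrt (π * s) := by
  rw [show 4 * π * s = 4 * (π * s) by ring,
    Real.sqrt_mul (by norm_num : (0:ℝ) ≤ 4),
    show Real.sqrt 4 = 2 by
      rw [show (4:ℝ) = 2 ^ 2 by norm_num, Real.sqrt_sq (by norm_num : (0:ℝ) ≤ 2)]]

lemma Ff'_bound (hC₀ : 0 < C₀) (hucont : Continuous u)
    (hu : ∀ y, 0 ≤ u y ∧ u y ≤ C₀) {s : ℝ} (hs : 0 < s) (x : ℝ) :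
    |∫ z, Kf' τ c u x s z| ≤ C₀ / 2 * (Real.exp (-s) / Real.sqrt (π * s)) := by
  have hsq : 0 < Real.sqrt (π * s) := Real.sqrt_pos.2 (by positivity)
  set c1 : ℝ := Real.exp (-s) / Real.sqrt (4 * π * s) with hc1
  have hc1n : 0 ≤ c1 := c1_nonneg s
  set k : ℝ → ℝ := fun z => (z - x) / (2 * s)
    * (c1 * Real.exp (-(x - z) ^ 2 / (4 * s))) with hk
  have hkabs : ∀ z, |k z| = c1 / (2 * s) * (|z - x| * Real.exp (-(x - z) ^ 2 / (4 * s))) := by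
    intro z
    simp only [hk, abs_mul, abs_div, Real.abs_exp, abs_of_nonneg hc1n,
      abs_of_pos (show (0:ℝ) < 2 * s by positivity)]
    ring
  have hkcont : Continuous k := by
    exact ((continuous_id.sub continuous_const).div_const _).mul
      (continuous_const.mul
        (Real.continuous_exp.comp (((continuous_const.sub continuous_id).pow 2).neg.div_const _)))
  have hkint : Integrable k := by
    refine Integrable.mono' ((intK_abs_integrable hs x).const_mul (c1 / (2 * s)))
      hkcont.aestronglyMeasurable (Eventually.of_forall fun z => ?_)
    rw [Real.norm_eq_abs, hkabs z]
  -- Kf' = k * u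
  have hKf' : ∀ z, Kf' τ c u x s z = k z * u (z + τ * c * s) := fun z => rfl
  -- integral of k is zero
  have hkzero : ∫ z, k z = 0 := by
    have : (fun z => k z) = fun z => c1 / (2 * s)
        * ((z - x) * Real.exp (-(x - z) ^ 2 / (4 * s))) := by
      funext z; simp only [hk]; ring
    rw [this, integral_const_mul, intK_odd s x, mul_zero]
  have hub : ∀ z : ℝ, |u (z + τ * c * s)| ≤ C₀ := fun z =>
    abs_le.2 ⟨by linarith [(hu (z + τ * c * s)).1], (hu (z + τ * c * s)).2⟩
  -- Kf' integrable
  have hKint : Integrable (fun z => Kf' τ c u x s z) := by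
    have h := Integrable.bdd_mul hkint
      ((hucont.comp (continuous_id.add continuous_const)).aestronglyMeasurable)
      (c := C₀) (ae_of_all _ fun z => by simpa [Real.norm_eq_abs] using hub z)
    exact h.congr (Eventually.of_forall fun z => by
      simp only [Function.comp_apply, id_eq, Pi.add_apply]; rw [hKf' z, mul_comm])
  -- centering
  have hint1 : Integrable (fun z => k z * (u (z + τ * c * s) - C₀ / 2)) := by
    have h := hKint.sub (hkint.const_mul (C₀ / 2))
    exact h.congr (Eventually.of_forall fun z => by
      simp only [Pi.sub_apply]; rw [hKf' z]; ring)
  have hsplit : ∫ z, Kf' τ c u x s z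
      = ∫ z, k z * (u (z + τ * c * s) - C₀ / 2) := by
    have h1 : (fun z => Kf' τ c u x s z)
        = fun z => k z * (u (z + τ * c * s) - C₀ / 2) + C₀ / 2 * k z := by
      funext z; rw [hKf' z]; ring
    rw [h1, integral_add hint1 (hkint.const_mul _), integral_const_mul, hkzero,
      mul_zero, add_zero]
  rw [hsplit]
  have hno : |∫ z, k z * (u (z + τ * c * s) - C₀ / 2)| ≤ ∫ z, C₀ / 2 * |k z| := by
    rw [← Real.norm_eq_abs]
    refine norm_integral_le_of_norm_le (hkint.abs.const_mul _)
      (Eventually.of_forall fun z => ?_)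
    rw [Real.norm_eq_abs, abs_mul]
    have hw : |u (z + τ * c * s) - C₀ / 2| ≤ C₀ / 2 :=
      abs_le.2 ⟨by linarith [(hu (z + τ * c * s)).1], by linarith [(hu (z + τ * c * s)).2]⟩
    calc |k z| * |u (z + τ * c * s) - C₀ / 2| ≤ |k z| * (C₀ / 2) :=
          mul_le_mul_of_nonneg_left hw (abs_nonneg _)
      _ = C₀ / 2 * |k z| := mul_comm _ _
  have hval : ∫ z, C₀ / 2 * |k z| = C₀ / 2 * (c1 / (2 * s) * (4 * s)) := by
    rw [integral_const_mul]
    congr 1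
    have h2 : (fun z => |k z|) = fun z => c1 / (2 * s)
        * (|z - x| * Real.exp (-(x - z) ^ 2 / (4 * s))) := funext hkabs
    rw [h2, integral_const_mul, intK_abs hs x]
  refine hno.trans (le_of_eq ?_)
  rw [hval, hc1, sqrt4pis hs]
  field_simp
  ring

lemma weight_intOn : IntegrableOn (fun s => Real.exp (-s) / Real.sqrt (π * s)) (Ioi 0) ∧
    ∫ s in Ioi (0:ℝ), Real.exp (-s) / Real.sqrt (π * s) = 1 := by
  have hsqpi : (0:ℝ) < Real.sqrt π := Real.sqrt_pos.2 pi_pos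
  have heq : ∀ s ∈ Ioi (0:ℝ), (Real.sqrt π)⁻¹ * (Real.exp (-s) * s ^ ((1:ℝ)/2 - 1))
      = Real.exp (-s) / Real.sqrt (π * s) := by
    intro s hs
    have hs' : (0:ℝ) < s := hs
    have h1 : Real.sqrt (π * s) = Real.sqrt π * Real.sqrt s := Real.sqrt_mul pi_pos.le s
    have h2 : s ^ ((1:ℝ)/2 - 1) = (Real.sqrt s)⁻¹ := by
      rw [show ((1:ℝ)/2 - 1) = -(1/2) by norm_num, Real.rpow_neg hs'.le,
        ← Real.sqrt_eq_rpow]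
    rw [h1, h2]
    have hss : (0:ℝ) < Real.sqrt s := Real.sqrt_pos.2 hs'
    field_simp
  have hint : IntegrableOn (fun s => (Real.sqrt π)⁻¹
      * (Real.exp (-s) * s ^ ((1:ℝ)/2 - 1))) (Ioi 0) :=
    (Real.GammaIntegral_convergent one_half_pos).const_mul _
  constructor
  · exact hint.congr_fun heq measurableSet_Ioi
  · rw [← setIntegral_congr_fun measurableSet_Ioi heq, integral_const_mul,
      ← Real.Gamma_eq_integral one_half_pos]
    rw [show (1:ℝ)/2 = 1/2 by norm_num, Real.Gamma_one_half_eq]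
    field_simp

lemma Ff_aesm (hucont : Continuous u) (x : ℝ) :
    AEStronglyMeasurable (fun s => ∫ z, Kf τ c u x s z) (volume.restrict (Ioi 0)) :=
  (((measKf τ c hucont x).stronglyMeasurable).integral_prod_right).aestronglyMeasurable.restrict

lemma Ff'_aesm (hucont : Continuous u) (x : ℝ) :
    AEStronglyMeasurable (fun s => ∫ z, Kf' τ c u x s z) (volume.restrict (Ioi 0)) :=
  (((measKf' τ c hucont x).stronglyMeasurable).integral_prod_right).aestronglyMeasurable.restrict

lemma expC_intOn : IntegrableOn (fun s : ℝ => C₀ * Real.exp (-s)) (Ioi 0) := by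
  have h := exp_neg_integrableOn_Ioi 0 (zero_lt_one (α := ℝ))
  have h2 : IntegrableOn (fun s : ℝ => Real.exp (-s)) (Ioi 0) :=
    h.congr_fun (fun s _ => by norm_num) measurableSet_Ioi
  exact h2.const_mul C₀

lemma Ff_intOn (hC₀ : 0 < C₀) (hucont : Continuous u) (hu : ∀ y, 0 ≤ u y ∧ u y ≤ C₀)
    (x : ℝ) : IntegrableOn (fun s => ∫ z, Kf τ c u x s z) (Ioi 0) := by
  refine Integrable.mono' (expC_intOn (C₀ := C₀)) (Ff_aesm hucont x)
    (((ae_restrict_iff' measurableSet_Ioi).2 (ae_of_all _ fun s hs => ?_)))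
  rw [Real.norm_eq_abs, abs_of_nonneg (Ff_nonneg hu x s)]
  exact Ff_le hC₀ hucont hu hs x

end

section
variable {τ c C₀ : ℝ} {u : ℝ → ℝ}

lemma vInt_hasDerivAt (hC₀ : 0 < C₀) (hucont : Continuous u)
    (hu : ∀ y, 0 ≤ u y ∧ u y ≤ C₀) (x₀ : ℝ) :
    HasDerivAt (vInt τ c u) (∫ s in Ioi (0:ℝ), ∫ z, Kf' τ c u x₀ s z) x₀ ∧
    |∫ s in Ioi (0:ℝ), ∫ z, Kf' τ c u x₀ s z| ≤ C₀ / 2 := by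
  have hbnd : ∀ᵐ s ∂(volume.restrict (Ioi (0:ℝ))), ∀ x ∈ Metric.ball x₀ 1,
      ‖∫ z, Kf' τ c u x s z‖ ≤ C₀ / 2 * (Real.exp (-s) / Real.sqrt (π * s)) := by
    refine (ae_restrict_iff' measurableSet_Ioi).2 (ae_of_all _ fun s hs x _ => ?_)
    rw [Real.norm_eq_abs]
    exact Ff'_bound hC₀ hucont hu hs x
  have hbint : Integrable (fun s => C₀ / 2 * (Real.exp (-s) / Real.sqrt (π * s)))
      (volume.restrict (Ioi (0:ℝ))) := weight_intOn.1.const_mul _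
  have h := hasDerivAt_integral_of_dominated_loc_of_deriv_le
    (μ := volume.restrict (Ioi (0:ℝ))) (x₀ := x₀)
    (F := fun x s => ∫ z, Kf τ c u x s z) (F' := fun x s => ∫ z, Kf' τ c u x s z)
    (bound := fun s => C₀ / 2 * (Real.exp (-s) / Real.sqrt (π * s))) (Metric.ball_mem_nhds x₀ one_pos)
    (Eventually.of_forall fun x => Ff_aesm hucont x)
    (Ff_intOn hC₀ hucont hu x₀) (Ff'_aesm hucont x₀) hbnd hbint
    ((ae_restrict_iff' measurableSet_Ioi).2 (ae_of_all _ fun s hs x _ =>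
      Ff_hasDerivAt hC₀ hucont hu hs x))
  refine ⟨h.2, ?_⟩
  have hle : ‖∫ s in Ioi (0:ℝ), ∫ z, Kf' τ c u x₀ s z‖ ≤
      ∫ s in Ioi (0:ℝ), C₀ / 2 * (Real.exp (-s) / Real.sqrt (π * s)) := by
    refine norm_integral_le_of_norm_le hbint ?_
    filter_upwards [hbnd] with s hsb
    exact hsb x₀ (Metric.mem_ball_self one_pos)
  rw [Real.norm_eq_abs] at hle
  calc |∫ s in Ioi (0:ℝ), ∫ z, Kf' τ c u x₀ s z| ≤ _ := hle
    _ = C₀ / 2 := by rw [integral_const_mul, weight_intOn.2, mul_one]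

end

/-- if `0 ≤ u ≤ C₀` is bounded continuous, then `0 ≤ v ≤ C₀`, `v` is
differentiable, and `|v'(x)| ≤ C₀/2`. -/
theorem vInt_bounds (τ c C₀ : ℝ) (hτ : 0 ≤ τ) (hC₀ : 0 < C₀)
    (u : ℝ → ℝ) (hucont : Continuous u) (hubdd : ∃ M, ∀ x, |u x| ≤ M)
    (hu : ∀ x, 0 ≤ u x ∧ u x ≤ C₀) :
    (∀ x : ℝ, 0 ≤ vInt τ c u x ∧ vInt τ c u x ≤ C₀) ∧
    Differentiable ℝ (vInt τ c u) ∧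
    (∀ x : ℝ, |deriv (vInt τ c u) x| ≤ C₀ / 2) := by
  have hveq : ∀ x, vInt τ c u x = ∫ s in Ioi (0:ℝ), ∫ z, Kf τ c u x s z := fun x => rfl
  refine ⟨fun x => ⟨?_, ?_⟩, ?_, ?_⟩
  · rw [hveq x]
    exact setIntegral_nonneg measurableSet_Ioi fun s _ => Ff_nonneg hu x s
  · rw [hveq x]
    calc (∫ s in Ioi (0:ℝ), ∫ z, Kf τ c u x s z)
        ≤ ∫ s in Ioi (0:ℝ), C₀ * Real.exp (-s) := by
          refine setIntegral_mono_on (Ff_intOn hC₀ hucont hu x) expC_intOn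
            measurableSet_Ioi fun s hs => Ff_le hC₀ hucont hu hs x
      _ = C₀ := by rw [integral_const_mul, integral_exp_neg_Ioi_zero, mul_one]
  · exact fun x => ((vInt_hasDerivAt hC₀ hucont hu x).1).differentiableAt
  · intro x
    rw [((vInt_hasDerivAt hC₀ hucont hu x).1).deriv]
    exact (vInt_hasDerivAt hC₀ hucont hu x).2
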